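/- arXiv:1003.2081 — 4 statements merged into one kernel-verified Lean document; each statement's English description precedes it below -/
import Mathlib

section
/- (Corollary 3.5, commutativity) Multiplication in 𝒜 is commutative: for all a, b ∈ 𝒜, a·b = b·a. -/
/-- The smallest congruence on the free magma on one generator containing
all instances of the medial law `(w⊕x)⊕(y⊕z) = (w⊕y)⊕(x⊕z)`. -/
inductive MedialRel : FreeMagma PUnit → FreeMagma PUnit → Prop
  | medial (w x y z : FreeMagma PUnit) :
      MedialRel ((w * x) * (y * z)) ((w * y) * (x * z))
  | refl (a : FreeMagma PUnit) : MedialRel a a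
  | symm {a b : FreeMagma PUnit} : MedialRel a b → MedialRel b a
  | trans {a b c : FreeMagma PUnit} : MedialRel a b → MedialRel b c → MedialRel a c
  | mul {a b c d : FreeMagma PUnit} :
      MedialRel a b → MedialRel c d → MedialRel (a * c) (b * d)

/-- The noncommutative natural numbers `𝒜 := M/∼`. -/
def NCN : Type := Quot MedialRel

/-- The induced binary operation `⊕` on `𝒜`. -/
def NCN.oplus : NCN → NCN → NCN :=
  Quot.map₂ (· * ·) (fun a _ _ h => MedialRel.mul (MedialRel.refl a) h)
    (fun _ _ b h => MedialRel.mul h (MedialRel.refl b))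

/-- The class of the generator `1` in `𝒜`. -/
def NCN.one : NCN := Quot.mk _ (FreeMagma.of PUnit.unit)

/-- Substitution multiplication on `M`: `a · b` is the image of `a` under the unique
magma homomorphism `M → M` sending the generator to `b`. -/
def FreeMagma.subMul (a b : FreeMagma PUnit) : FreeMagma PUnit :=
  (FreeMagma.lift fun _ => b) a

theorem MedialRel.subMul_left {a a' : FreeMagma PUnit} (b : FreeMagma PUnit)
    (h : MedialRel a a') : MedialRel (a.subMul b) (a'.subMul b) := by
  induction h with
  | medial w x y z =>
      simp only [FreeMagma.subMul, map_mul]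
      exact MedialRel.medial _ _ _ _
  | refl a => exact MedialRel.refl _
  | symm _ ih => exact MedialRel.symm ih
  | trans _ _ ih1 ih2 => exact MedialRel.trans ih1 ih2
  | mul _ _ ih1 ih2 =>
      simp only [FreeMagma.subMul, map_mul] at *
      exact MedialRel.mul ih1 ih2

theorem MedialRel.subMul_right (a : FreeMagma PUnit) {b b' : FreeMagma PUnit}
    (h : MedialRel b b') : MedialRel (a.subMul b) (a.subMul b') := by
  induction a with
  | ih1 u => simpa [FreeMagma.subMul] using h
  | ih2 x y ihx ihy =>
      simp only [FreeMagma.subMul, map_mul] at *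
      exact MedialRel.mul ihx ihy

/-- The induced multiplication on `𝒜`. -/
def NCN.mul : NCN → NCN → NCN :=
  Quot.map₂ FreeMagma.subMul (fun a _ _ h => MedialRel.subMul_right a h)
    (fun _ _ b h => MedialRel.subMul_left b h)

theorem MedialRel.subMul_mul (b x y : FreeMagma PUnit) :
    MedialRel (b.subMul (x * y)) (b.subMul x * b.subMul y) := by
  induction b with
  | ih1 u => simpa [FreeMagma.subMul] using MedialRel.refl (x * y)
  | ih2 p q ihp ihq =>
      simp only [FreeMagma.subMul, map_mul] at *
      exact MedialRel.trans (MedialRel.mul ihp ihq) (MedialRel.medial _ _ _ _)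

theorem FreeMagma.subMul_one (b : FreeMagma PUnit) :
    b.subMul (FreeMagma.of PUnit.unit) = b := by
  induction b with
  | ih1 u => simp [FreeMagma.subMul]
  | ih2 p q ihp ihq => simp only [FreeMagma.subMul, map_mul] at *; rw [ihp, ihq]

theorem MedialRel.subMul_comm (a b : FreeMagma PUnit) :
    MedialRel (a.subMul b) (b.subMul a) := by
  induction a with
  | ih1 u =>
      cases u
      simp only [FreeMagma.subMul, FreeMagma.lift_of]
      rw [show (FreeMagma.lift fun _ => FreeMagma.of PUnit.unit) b = b from
        FreeMagma.subMul_one b]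
      exact MedialRel.refl b
  | ih2 p q ihp ihq =>
      simp only [FreeMagma.subMul, map_mul] at *
      exact MedialRel.trans (MedialRel.mul ihp ihq)
        (MedialRel.symm (MedialRel.subMul_mul b p q))

/-- Corollary 3.5, commutativity: multiplication in `𝒜` is commutative. -/
theorem ncn_mul_comm (a b : NCN) : NCN.mul a b = NCN.mul b a := by
  induction a using Quot.ind
  induction b using Quot.ind
  exact Quot.sound (MedialRel.subMul_comm _ _)
end

section
/- (Claim 4.1) Every element a ∈ 𝒜 admits a factorization into irreducibles: there is a (possibly empty) finite list a₁, …, aₙ of elements of 𝒜, each irreducible, with a = a₁·a₂·…·aₙ. Here an element p ∈ 𝒜 is called irreducible if p ≠ 1 and whenever p = b·c one has b = 1 or c = 1. -/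
/-- An element of `𝒜` is irreducible if it is not `1` and cannot be written as a
product of two elements both different from `1`. -/
def NCN.Irred (p : NCN) : Prop :=
  p ≠ NCN.one ∧ ∀ b c : NCN, p = NCN.mul b c → b = NCN.one ∨ c = NCN.one

/-- Size (number of leaves) of a free magma term. -/
def FreeMagma.sz : FreeMagma PUnit → ℕ
  | .of _ => 1
  | .mul a b => a.sz + b.sz

theorem FreeMagma.sz_mul (a b : FreeMagma PUnit) : (a * b).sz = a.sz + b.sz := rfl

theorem FreeMagma.sz_pos (a : FreeMagma PUnit) : 0 < a.sz := by
  induction a with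
  | ih1 u => exact Nat.one_pos
  | ih2 x y ihx ihy => rw [FreeMagma.sz_mul]; omega

theorem FreeMagma.sz_eq_one {a : FreeMagma PUnit} (h : a.sz = 1) :
    a = FreeMagma.of PUnit.unit := by
  induction a with
  | ih1 u => rfl
  | ih2 x y ihx ihy =>
      rw [FreeMagma.sz_mul] at h
      have hx := x.sz_pos; have hy := y.sz_pos
      omega

theorem MedialRel.sz_eq {a b : FreeMagma PUnit} (h : MedialRel a b) : a.sz = b.sz := by
  induction h with
  | medial w x y z => simp only [FreeMagma.sz_mul]; ring
  | refl a => rfl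
  | symm _ ih => omega
  | trans _ _ ih1 ih2 => omega
  | mul _ _ ih1 ih2 => simp only [FreeMagma.sz_mul]; omega

theorem FreeMagma.sz_subMul (a b : FreeMagma PUnit) :
    (a.subMul b).sz = a.sz * b.sz := by
  induction a with
  | ih1 u => simp [FreeMagma.subMul, FreeMagma.sz]
  | ih2 x y ihx ihy =>
      simp only [FreeMagma.subMul, map_mul] at *
      simp only [FreeMagma.sz_mul, ihx, ihy]
      ring

/-- Size descends to the quotient. -/
def NCN.size : NCN → ℕ := Quot.lift FreeMagma.sz (fun _ _ h => h.sz_eq)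

theorem NCN.size_one : NCN.one.size = 1 := rfl

theorem NCN.size_mul (a b : NCN) : (NCN.mul a b).size = a.size * b.size := by
  induction a using Quot.ind
  induction b using Quot.ind
  exact FreeMagma.sz_subMul _ _

theorem NCN.size_pos (a : NCN) : 0 < a.size := by
  induction a using Quot.ind
  exact FreeMagma.sz_pos _

theorem NCN.eq_one_of_size_eq_one {a : NCN} (h : a.size = 1) : a = NCN.one := by
  induction a using Quot.ind with
  | _ x => exact congrArg (Quot.mk _) (FreeMagma.sz_eq_one h)

theorem FreeMagma.subMul_assoc (a b c : FreeMagma PUnit) :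
    (a.subMul b).subMul c = a.subMul (b.subMul c) := by
  induction a with
  | ih1 u => rfl
  | ih2 x y ihx ihy => simp only [FreeMagma.subMul, map_mul] at *; rw [ihx, ihy]

theorem FreeMagma.one_subMul (b : FreeMagma PUnit) :
    (FreeMagma.of PUnit.unit).subMul b = b := rfl

theorem NCN.mul_assoc (a b c : NCN) : NCN.mul (NCN.mul a b) c = NCN.mul a (NCN.mul b c) := by
  induction a using Quot.ind
  induction b using Quot.ind
  induction c using Quot.ind
  exact congrArg (Quot.mk _) (FreeMagma.subMul_assoc _ _ _)

theorem NCN.one_mul (b : NCN) : NCN.mul NCN.one b = b := by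
  induction b using Quot.ind
  rfl

theorem NCN.mul_one (a : NCN) : NCN.mul a NCN.one = a := by
  induction a using Quot.ind with
  | _ x =>
    refine congrArg (Quot.mk _) ?_
    induction x with
    | ih1 u => rfl
    | ih2 x y ihx ihy => simp only [FreeMagma.subMul, map_mul] at *; rw [ihx, ihy]

theorem NCN.foldr_append (L1 L2 : List NCN) :
    (L1 ++ L2).foldr NCN.mul NCN.one
      = NCN.mul (L1.foldr NCN.mul NCN.one) (L2.foldr NCN.mul NCN.one) := by
  induction L1 with
  | nil => rw [List.nil_append, List.foldr_nil, NCN.one_mul]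
  | cons p t ih => simp only [List.cons_append, List.foldr_cons, ih, NCN.mul_assoc]

/-- Claim 4.1: every element of `𝒜` is a (possibly empty) product of
irreducibles, the empty product being `1`. -/
theorem ncn_factorization_into_irreducibles (a : NCN) :
    ∃ L : List NCN, (∀ p ∈ L, NCN.Irred p) ∧ a = L.foldr NCN.mul NCN.one := by
  suffices h : ∀ n (a : NCN), a.size = n → ∃ L : List NCN,
      (∀ p ∈ L, NCN.Irred p) ∧ a = L.foldr NCN.mul NCN.one from h a.size a rfl
  intro n
  induction n using Nat.strong_induction_on with
  | _ n ih =>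
  intro a hn
  by_cases h1 : a = NCN.one
  · exact ⟨[], by simp, by simp [h1]⟩
  by_cases hirr : NCN.Irred a
  · exact ⟨[a], by simpa using hirr, by rw [List.foldr_cons, List.foldr_nil, NCN.mul_one]⟩
  · have : ∃ b c : NCN, a = NCN.mul b c ∧ b ≠ NCN.one ∧ c ≠ NCN.one := by
      by_contra hcon
      push_neg at hcon
      exact hirr ⟨h1, fun b c hbc => by
        by_contra hor; push_neg at hor
        exact hor.2 (hcon b c hbc hor.1)⟩
    obtain ⟨b, c, habc, hb, hc⟩ := this
    have hb2 : 2 ≤ b.size := by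
      by_contra h
      have := b.size_pos
      have hs : b.size = 1 := by omega
      exact hb (NCN.eq_one_of_size_eq_one hs)
    have hc2 : 2 ≤ c.size := by
      by_contra h
      have := c.size_pos
      have hs : c.size = 1 := by omega
      exact hc (NCN.eq_one_of_size_eq_one hs)
    have hsz : a.size = b.size * c.size := by rw [habc, NCN.size_mul]
    have hbn : b.size < n := by nlinarith [hn]
    have hcn : c.size < n := by nlinarith [hn]
    obtain ⟨L1, hL1, hb1⟩ := ih b.size hbn b rfl
    obtain ⟨L2, hL2, hc1⟩ := ih c.size hcn c rfl
    refine ⟨L1 ++ L2, ?_, ?_⟩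
    · intro p hp
      rcases List.mem_append.1 hp with h | h
      · exact hL1 p h
      · exact hL2 p h
    · rw [NCN.foldr_append, ← hb1, ← hc1, habc]
end

section
/- (§5.4) If a·b₁ = a·b₂ in 𝒜, then ℓ(b₁) = ℓ(b₂) in ℤ[q]. -/
/-- The length polynomial on the free magma. -/
noncomputable def FreeMagma.ellM (a : FreeMagma PUnit.{1}) : Polynomial ℤ :=
  FreeMagma.recOnMul a (fun _ => 1) (fun _ _ px py => px + Polynomial.X * py)

@[simp] theorem FreeMagma.ellM_of (u : PUnit.{1}) : FreeMagma.ellM (FreeMagma.of u) = 1 := rfl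

@[simp] theorem FreeMagma.ellM_mul (x y : FreeMagma PUnit.{1}) :
    FreeMagma.ellM (x * y) = FreeMagma.ellM x + Polynomial.X * FreeMagma.ellM y := rfl

theorem FreeMagma.ellM_subMul (a b : FreeMagma PUnit.{1}) :
    FreeMagma.ellM (a.subMul b) = FreeMagma.ellM a * FreeMagma.ellM b := by
  induction a with
  | ih1 u => simp [FreeMagma.subMul]
  | ih2 x y ihx ihy =>
      have : (x * y).subMul b = x.subMul b * y.subMul b := by
        simp [FreeMagma.subMul, map_mul]
      rw [this, FreeMagma.ellM_mul, ihx, ihy, FreeMagma.ellM_mul]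
      ring

theorem FreeMagma.ellM_eval_one_pos (a : FreeMagma PUnit.{1}) :
    0 < (FreeMagma.ellM a).eval 1 := by
  induction a with
  | ih1 u => simp
  | ih2 x y ihx ihy =>
      rw [FreeMagma.ellM_mul]
      simp only [Polynomial.eval_add, Polynomial.eval_mul, Polynomial.eval_X, one_mul]
      omega

theorem FreeMagma.ellM_ne_zero (a : FreeMagma PUnit.{1}) : FreeMagma.ellM a ≠ 0 := by
  intro h
  have := FreeMagma.ellM_eval_one_pos a
  rw [h] at this
  simp at this

theorem ell_mk (ell : NCN → Polynomial ℤ) (hone : ell NCN.one = 1)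
    (hoplus : ∀ a b : NCN, ell (NCN.oplus a b) = ell a + Polynomial.X * ell b)
    (m : FreeMagma PUnit.{1}) : ell (Quot.mk _ m) = FreeMagma.ellM m := by
  induction m with
  | ih1 u => exact hone
  | ih2 x y ihx ihy =>
      have : (Quot.mk MedialRel (x * y)) = NCN.oplus (Quot.mk _ x) (Quot.mk _ y) := rfl
      rw [this]
      exact (hoplus _ _).trans (by rw [ihx, ihy, FreeMagma.ellM_mul])

/-- §5.4: if `a·b₁ = a·b₂` in `𝒜` then `ℓ(b₁) = ℓ(b₂)` in `ℤ[q]`. -/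
theorem ncn_ell_eq_of_mul_eq (ell : NCN → Polynomial ℤ)
    (hone : ell NCN.one = 1)
    (hoplus : ∀ a b : NCN, ell (NCN.oplus a b) = ell a + Polynomial.X * ell b) (a b1 b2 : NCN)
    (h : NCN.mul a b1 = NCN.mul a b2) : ell b1 = ell b2 := by
  obtain ⟨ma, rfl⟩ := Quot.exists_rep a
  obtain ⟨m1, rfl⟩ := Quot.exists_rep b1
  obtain ⟨m2, rfl⟩ := Quot.exists_rep b2
  have hm : NCN.mul (Quot.mk _ ma) (Quot.mk _ m1) = Quot.mk MedialRel (ma.subMul m1) := rfl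
  have hm2 : NCN.mul (Quot.mk _ ma) (Quot.mk _ m2) = Quot.mk MedialRel (ma.subMul m2) := rfl
  rw [hm, hm2] at h
  have := congrArg ell h
  rw [ell_mk ell hone hoplus, ell_mk ell hone hoplus,
    FreeMagma.ellM_subMul, FreeMagma.ellM_subMul] at this
  rw [ell_mk ell hone hoplus, ell_mk ell hone hoplus]
  exact mul_left_cancel₀ (FreeMagma.ellM_ne_zero ma) this
end

section
/- (§2.4, table 2 for n = 5) The image in 𝒜 of the set M₅ of elements of M of magnitude 5 has exactly 13 elements, whereas |M₅| = C(5) = 14; the unique coincidence is the identity (1⊕(1⊕1))⊕(1⊕1) = (1⊕1)⊕((1⊕1)⊕1) in 𝒜. -/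
deriving instance DecidableEq for FreeMagma

abbrev o : FreeMagma PUnit := FreeMagma.of PUnit.unit

def ev : FreeMagma PUnit → ℕ
  | .of _ => 1
  | .mul a b => 2 * ev a + 6 * ev b

@[simp] lemma ev_of (u : PUnit) : ev (FreeMagma.of u) = 1 := rfl
@[simp] lemma ev_mul (a b : FreeMagma PUnit) : ev (a * b) = 2 * ev a + 6 * ev b := rfl


lemma ev_eq_of_rel {a b : FreeMagma PUnit} (h : MedialRel a b) : ev a = ev b := by
  induction h with
  | medial w x y z => simp; ring
  | refl a => rfl
  | symm _ ih => exact ih.symm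
  | trans _ _ ih1 ih2 => exact ih1.trans ih2
  | mul _ _ ih1 ih2 => simp [ih1, ih2]

lemma rel_of_quot_eq {a b : FreeMagma PUnit}
    (h : Quot.mk MedialRel a = Quot.mk MedialRel b) : MedialRel a b := by
  have h' := Quot.eq.mp h
  clear h
  induction h' with
  | rel _ _ hr => exact hr
  | refl _ => exact .refl _
  | symm _ _ _ ih => exact ih.symm
  | trans _ _ _ _ _ ih1 ih2 => exact ih1.trans ih2

def S5 : Finset (FreeMagma PUnit) :=
  { o * (o * (o * (o * o))), o * (o * ((o * o) * o)), o * ((o * o) * (o * o)),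
    o * ((o * (o * o)) * o), o * (((o * o) * o) * o),
    (o * o) * (o * (o * o)), (o * o) * ((o * o) * o),
    (o * (o * o)) * (o * o), ((o * o) * o) * (o * o),
    (o * (o * (o * o))) * o, (o * ((o * o) * o)) * o, ((o * o) * (o * o)) * o,
    ((o * (o * o)) * o) * o, (((o * o) * o) * o) * o }

example : S5.card = 14 := by decide

def A5 : FreeMagma PUnit := (o * (o * o)) * (o * o)
def B5 : FreeMagma PUnit := (o * o) * ((o * o) * o)

lemma key14 : ∀ a ∈ S5, ∀ b ∈ S5, ev a = ev b → a = b ∨ (a = A5 ∧ b = B5) ∨ (a = B5 ∧ b = A5) := by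
  decide

lemma len1 : ∀ {m : FreeMagma PUnit}, m.length = 1 → m = o := by
  intro m h
  cases m with
  | of u => cases u; rfl
  | mul a b =>
    have ha := a.length_pos; have hb := b.length_pos
    have h' : a.length + b.length = 1 := h
    omega

lemma len2 : ∀ {m : FreeMagma PUnit}, m.length = 2 → m = o * o := by
  intro m h
  cases m with
  | of u => exact absurd h (by simp [FreeMagma.length])
  | mul a b =>
    have ha := a.length_pos; have hb := b.length_pos
    have h' : a.length + b.length = 2 := h
    have : a.length = 1 ∧ b.length = 1 := by omega
    rw [len1 this.1, len1 this.2]; rfl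

lemma len3 : ∀ {m : FreeMagma PUnit}, m.length = 3 → m = o * (o * o) ∨ m = (o * o) * o := by
  intro m h
  cases m with
  | of u => exact absurd h (by simp [FreeMagma.length])
  | mul a b =>
    have ha := a.length_pos; have hb := b.length_pos
    have h' : a.length + b.length = 3 := h
    have : a.length = 1 ∧ b.length = 2 ∨ a.length = 2 ∧ b.length = 1 := by omega
    rcases this with ⟨h1, h2⟩ | ⟨h1, h2⟩
    · rw [len1 h1, len2 h2]; left; rfl
    · rw [len2 h1, len1 h2]; right; rfl

lemma len4 : ∀ {m : FreeMagma PUnit}, m.length = 4 →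
    m = o * (o * (o * o)) ∨ m = o * ((o * o) * o) ∨ m = (o * o) * (o * o) ∨
    m = (o * (o * o)) * o ∨ m = ((o * o) * o) * o := by
  intro m h
  cases m with
  | of u => exact absurd h (by simp [FreeMagma.length])
  | mul a b =>
    have ha := a.length_pos; have hb := b.length_pos
    have h' : a.length + b.length = 4 := h
    have : a.length = 1 ∧ b.length = 3 ∨ a.length = 2 ∧ b.length = 2 ∨
        a.length = 3 ∧ b.length = 1 := by omega
    rcases this with ⟨h1, h2⟩ | ⟨h1, h2⟩ | ⟨h1, h2⟩
    · rw [len1 h1]; rcases len3 h2 with h3 | h3 <;> rw [h3] <;> tauto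
    · rw [len2 h1, len2 h2]; show (o*o)*(o*o) = _ ∨ _; tauto
    · rw [len1 h2]; rcases len3 h1 with h3 | h3 <;> rw [h3] <;> tauto

lemma len5 : ∀ {m : FreeMagma PUnit}, m.length = 5 → m ∈ S5 := by
  intro m h
  cases m with
  | of u => exact absurd h (by simp [FreeMagma.length])
  | mul a b =>
    have ha := a.length_pos; have hb := b.length_pos
    have h' : a.length + b.length = 5 := h
    have : a.length = 1 ∧ b.length = 4 ∨ a.length = 2 ∧ b.length = 3 ∨
        a.length = 3 ∧ b.length = 2 ∨ a.length = 4 ∧ b.length = 1 := by omega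
    rcases this with ⟨h1, h2⟩ | ⟨h1, h2⟩ | ⟨h1, h2⟩ | ⟨h1, h2⟩
    · rw [len1 h1]; rcases len4 h2 with h4 | h4 | h4 | h4 | h4 <;> rw [h4] <;> decide
    · rw [len2 h1]; rcases len3 h2 with h3 | h3 <;> rw [h3] <;> decide
    · rw [len2 h2]; rcases len3 h1 with h3 | h3 <;> rw [h3] <;> decide
    · rw [len1 h2]; rcases len4 h1 with h4 | h4 | h4 | h4 | h4 <;> rw [h4] <;> decide

lemma setS5 : {m : FreeMagma PUnit | m.length = 5} = ↑S5 := by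
  ext m
  simp only [Set.mem_setOf_eq, Finset.coe_insert, Finset.coe_singleton, Finset.mem_coe]
  constructor
  · exact len5
  · intro hm; fin_cases hm <;> rfl


lemma key13 : ∀ a ∈ S5.erase B5, ∀ b ∈ S5.erase B5, ev a = ev b → a = b := by decide

lemma image_eq : (fun m => Quot.mk MedialRel m) '' ↑S5 =
    (fun m => Quot.mk MedialRel m) '' ↑(S5.erase B5) := by
  apply Set.Subset.antisymm
  · rintro x ⟨m, hm, rfl⟩
    by_cases hB : m = B5
    · subst hB
      exact ⟨A5, by decide, Quot.sound (MedialRel.medial o (o * o) o o)⟩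
    · refine ⟨m, ?_, rfl⟩
      simp only [Finset.coe_erase, Set.mem_diff, Set.mem_singleton_iff]
      exact ⟨hm, hB⟩
  · exact Set.image_mono (by intro m hm; simp only [Finset.coe_erase, Set.mem_diff] at hm; exact hm.1)

lemma inj13 : Set.InjOn (fun m => Quot.mk MedialRel m) ↑(S5.erase B5) := by
  intro a ha b hb hq
  simp only [Finset.coe_erase, Set.mem_diff] at ha hb
  exact key13 a (Finset.mem_erase.mpr ⟨by simpa using ha.2, ha.1⟩)
    b (Finset.mem_erase.mpr ⟨by simpa using hb.2, hb.1⟩) (ev_eq_of_rel (rel_of_quot_eq hq))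

/-- §2.4, table 2 for `n = 5`: the set `M₅` of magnitude-5 elements of
`M` has `C(5) = 14` elements, its image in `𝒜` has exactly `13` elements, and the
unique coincidence is `(1⊕(1⊕1))⊕(1⊕1) = (1⊕1)⊕((1⊕1)⊕1)`. -/
theorem ncn_table2_magnitude_five :
    {m : FreeMagma PUnit | m.length = 5}.ncard = 14 ∧
    ((fun m => Quot.mk MedialRel m) '' {m : FreeMagma PUnit | m.length = 5}).ncard = 13 ∧
    Quot.mk MedialRel
        ((FreeMagma.of PUnit.unit * (FreeMagma.of PUnit.unit * FreeMagma.of PUnit.unit)) *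
          (FreeMagma.of PUnit.unit * FreeMagma.of PUnit.unit)) =
      Quot.mk MedialRel
        ((FreeMagma.of PUnit.unit * FreeMagma.of PUnit.unit) *
          ((FreeMagma.of PUnit.unit * FreeMagma.of PUnit.unit) * FreeMagma.of PUnit.unit)) ∧
    ∀ a b : FreeMagma PUnit, a.length = 5 → b.length = 5 → a ≠ b →
      Quot.mk MedialRel a = Quot.mk MedialRel b →
      (a = (FreeMagma.of PUnit.unit * (FreeMagma.of PUnit.unit * FreeMagma.of PUnit.unit)) *
            (FreeMagma.of PUnit.unit * FreeMagma.of PUnit.unit) ∧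
        b = (FreeMagma.of PUnit.unit * FreeMagma.of PUnit.unit) *
            ((FreeMagma.of PUnit.unit * FreeMagma.of PUnit.unit) * FreeMagma.of PUnit.unit)) ∨
      (a = (FreeMagma.of PUnit.unit * FreeMagma.of PUnit.unit) *
            ((FreeMagma.of PUnit.unit * FreeMagma.of PUnit.unit) * FreeMagma.of PUnit.unit) ∧
        b = (FreeMagma.of PUnit.unit * (FreeMagma.of PUnit.unit * FreeMagma.of PUnit.unit)) *
            (FreeMagma.of PUnit.unit * FreeMagma.of PUnit.unit)) := by
  refine ⟨?_, ?_, ?_, ?_⟩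
  · rw [setS5, Set.ncard_coe_finset]; decide
  · rw [setS5, image_eq, Set.ncard_image_of_injOn inj13, Set.ncard_coe_finset]; decide
  · exact Quot.sound (MedialRel.medial o (o * o) o o)
  · intro a b ha hb hne hq
    have hk := key14 a (len5 ha) b (len5 hb) (ev_eq_of_rel (rel_of_quot_eq hq))
    rcases hk with h | ⟨h1, h2⟩ | ⟨h1, h2⟩
    · exact absurd h hne
    · left; exact ⟨h1, h2⟩
    · right; exact ⟨h1, h2⟩
end
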